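/- Explicit inverse of an interval matrix with unit midpoint: Let Δ ∈ ℝ^{n×n} with Δ ≥ 0 entrywise, and suppose the interval matrix [I − Δ, I + Δ] is regular, i.e., every real matrix A with |A − I| ≤ Δ entrywise is invertible. Let M = (I − Δ)^{-1}, with diagonal entries m_{jj}, and let D_k be the diagonal matrix with entries k_j = 2 m_{jj}² / (2 m_{jj} − 1) for j = 1,…,n. Then for every pair of indices (i,j): min over all A with |A − I| ≤ Δ of (A^{-1})_{ij} equals (−M + D_k)_{ij}, and max over all A with |A − I| ≤ Δ of (A^{-1})_{ij} equals M_{ij}. -/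

import Mathlib

open Matrix Finset

lemma pow_entry_nonneg {n : ℕ} (X : Matrix (Fin n) (Fin n) ℝ)
    (hX : ∀ i j, 0 ≤ X i j) : ∀ N i j, 0 ≤ (X ^ N) i j := by
  intro N
  induction N with
  | zero => intro i j; by_cases h : i = j <;> simp [pow_zero, Matrix.one_apply, h]
  | succ N ih =>
    intro i j
    rw [pow_succ, Matrix.mul_apply]
    exact Finset.sum_nonneg fun k _ => mul_nonneg (ih i k) (hX k j)

lemma pow_entry_le {n : ℕ} (X : Matrix (Fin n) (Fin n) ℝ)
    (hX : ∀ i j, 0 ≤ X i j) (a : ℝ) (ha : ∀ i j, X i j ≤ a) (hn : 1 ≤ n) :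
    ∀ N, 1 ≤ N → ∀ i j, (X ^ N) i j ≤ ((n : ℝ) * a) ^ N := by
  have ha0 : 0 ≤ a := by
    obtain ⟨i, hi⟩ : ∃ i, i < n := ⟨0, hn⟩
    exact le_trans (hX ⟨i, hi⟩ ⟨i, hi⟩) (ha _ _)
  intro N hN
  induction N with
  | zero => omega
  | succ N ih =>
    intro i j
    rcases Nat.eq_or_lt_of_le hN with h1 | h1
    · simp only [← h1, pow_one]
      calc X i j ≤ a := ha i j
        _ = 1 * a := (one_mul a).symm
        _ ≤ (n : ℝ) * a := by
            apply mul_le_mul_of_nonneg_right _ ha0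
            exact_mod_cast hn
    · have hN' : 1 ≤ N := by omega
      have : (X ^ (N + 1)) i j = ∑ k, X i k * (X ^ N) k j := by
        rw [pow_succ']
        rfl
      rw [this]
      calc ∑ k, X i k * (X ^ N) k j ≤ ∑ _k : Fin n, a * ((n : ℝ) * a) ^ N := by
            apply Finset.sum_le_sum
            intro k _
            exact mul_le_mul (ha i k) (ih hN' k j) (pow_entry_nonneg X hX N k j) ha0
        _ = (n : ℝ) * a * ((n : ℝ) * a) ^ N := by
            rw [Finset.sum_const, Finset.card_univ, Fintype.card_fin]
            ring
        _ = ((n : ℝ) * a) ^ (N + 1) := by rw [← pow_succ']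

lemma small_inv_nonneg {n : ℕ} (X C : Matrix (Fin n) (Fin n) ℝ)
    (hX : ∀ i j, 0 ≤ X i j) (a : ℝ) (ha : ∀ i j, X i j ≤ a)
    (hsm : (n : ℝ) * a < 1) (hC : C * (1 - X) = 1) :
    ∀ i j, 0 ≤ C i j := by
  intro i j
  have hn : 1 ≤ n := i.pos
  have ha0 : 0 ≤ a := le_trans (hX i i) (ha i i)
  set r : ℝ := (n : ℝ) * a with hr
  have hr0 : 0 ≤ r := mul_nonneg (Nat.cast_nonneg n) ha0
  -- C = geom sum + C * X^N
  have key : ∀ N, C = (∑ k ∈ Finset.range N, X ^ k) + C * X ^ N := by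
    intro N
    have hg : (∑ k ∈ Finset.range N, X ^ k) * (X - 1) = X ^ N - 1 := geom_sum_mul X N
    have hcomm : (∑ k ∈ Finset.range N, X ^ k) * (1 - X) = 1 - X ^ N := by
      have := congrArg Neg.neg hg
      simpa [mul_sub, sub_mul, neg_sub] using this
    have : C * ((∑ k ∈ Finset.range N, X ^ k) * (1 - X)) = C * (1 - X ^ N) := by rw [hcomm]
    -- also (1 - X) * S = 1 - X^N; use Commute
    have hcomm' : (1 - X) * (∑ k ∈ Finset.range N, X ^ k) = 1 - X ^ N := by
      have : Commute X (∑ k ∈ Finset.range N, X ^ k) := Commute.sum_right _ _ _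
        (fun k _ => (Commute.pow_right (Commute.refl X) k))
      calc (1 - X) * (∑ k ∈ Finset.range N, X ^ k)
          = (∑ k ∈ Finset.range N, X ^ k) - X * (∑ k ∈ Finset.range N, X ^ k) := by
            rw [sub_mul, one_mul]
        _ = (∑ k ∈ Finset.range N, X ^ k) - (∑ k ∈ Finset.range N, X ^ k) * X := by rw [this.eq]
        _ = (∑ k ∈ Finset.range N, X ^ k) * (1 - X) := by rw [mul_sub, mul_one]
        _ = 1 - X ^ N := hcomm
    have h2 : C * ((1 - X) * (∑ k ∈ Finset.range N, X ^ k)) = ∑ k ∈ Finset.range N, X ^ k := by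
      rw [← mul_assoc, hC, one_mul]
    rw [hcomm', mul_sub, mul_one] at h2
    exact (sub_eq_iff_eq_add.mp h2)
  set c : ℝ := ∑ k, |C i k| with hc
  have hbound : ∀ N, 1 ≤ N → -(c * r ^ N) ≤ C i j := by
    intro N hN
    have hCN := key N
    have hentry : C i j = (∑ k ∈ Finset.range N, X ^ k) i j + (C * X ^ N) i j := by
      conv_lhs => rw [hCN]
      rw [Matrix.add_apply]
    have h1 : 0 ≤ (∑ k ∈ Finset.range N, X ^ k) i j := by
      rw [Matrix.sum_apply]
      exact Finset.sum_nonneg fun k _ => pow_entry_nonneg X hX k i j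
    have h2 : |(C * X ^ N) i j| ≤ c * r ^ N := by
      have : (C * X ^ N) i j = ∑ k, C i k * (X ^ N) k j := rfl
      rw [this]
      calc |∑ k, C i k * (X ^ N) k j| ≤ ∑ k, |C i k * (X ^ N) k j| :=
            Finset.abs_sum_le_sum_abs _ _
        _ ≤ ∑ k, |C i k| * r ^ N := by
            apply Finset.sum_le_sum
            intro k _
            rw [abs_mul]
            apply mul_le_mul_of_nonneg_left _ (abs_nonneg _)
            rw [abs_of_nonneg (pow_entry_nonneg X hX N k j)]
            exact pow_entry_le X hX a ha hn N hN k j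
        _ = c * r ^ N := by rw [← Finset.sum_mul]
    nlinarith [abs_nonneg ((C * X ^ N) i j), neg_abs_le ((C * X ^ N) i j), h1, h2, hentry]
  by_contra hneg
  push_neg at hneg
  have hten : Filter.Tendsto (fun N : ℕ => -(c * r ^ N)) Filter.atTop (nhds 0) := by
    have := tendsto_pow_atTop_nhds_zero_of_lt_one hr0 hsm
    have := this.const_mul c
    simpa using this.neg
  have : (0 : ℝ) ≤ C i j := by
    apply le_of_tendsto hten
    filter_upwards [Filter.eventually_ge_atTop 1] with N hN
    exact hbound N hN
  linarith

lemma interval_M_nonneg {n : ℕ} (Δ : Matrix (Fin n) (Fin n) ℝ) (hΔ : ∀ i j, 0 ≤ Δ i j)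
    (hReg : ∀ A : Matrix (Fin n) (Fin n) ℝ,
      (∀ i j, |A i j - (1 : Matrix (Fin n) (Fin n) ℝ) i j| ≤ Δ i j) → IsUnit A) :
    ∀ i j, 0 ≤ (1 - Δ)⁻¹ i j := by
  have hUnit : ∀ t ∈ Set.Icc (0:ℝ) 1, IsUnit (1 - t • Δ) := by
    intro t ht
    apply hReg
    intro i j
    have : (1 - t • Δ) i j - (1 : Matrix (Fin n) (Fin n) ℝ) i j = -(t * Δ i j) := by
      simp [Matrix.sub_apply, Matrix.smul_apply]
    rw [this, abs_neg, abs_of_nonneg (mul_nonneg ht.1 (hΔ i j))]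
    calc t * Δ i j ≤ 1 * Δ i j := mul_le_mul_of_nonneg_right ht.2 (hΔ i j)
      _ = Δ i j := one_mul _
  have hdet : ∀ t ∈ Set.Icc (0:ℝ) 1, IsUnit (1 - t • Δ).det :=
    fun t ht => (Matrix.isUnit_iff_isUnit_det _).mp (hUnit t ht)
  intro i0 j0
  -- continuity of each entry of the inverse on Icc 0 1
  have hcont : ∀ i j, ContinuousOn (fun t : ℝ => (1 - t • Δ)⁻¹ i j) (Set.Icc (0:ℝ) 1) := by
    intro i j
    have hA : Continuous (fun t : ℝ => 1 - t • Δ) :=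
      continuous_const.sub (continuous_id.smul continuous_const)
    have hd : Continuous (fun t : ℝ => (1 - t • Δ).det) := hA.matrix_det
    have hadj : Continuous (fun t : ℝ => (1 - t • Δ).adjugate i j) :=
      hA.matrix_adjugate.matrix_elem i j
    have heq : ∀ t ∈ Set.Icc (0:ℝ) 1,
        (1 - t • Δ)⁻¹ i j = ((1 - t • Δ).det)⁻¹ * (1 - t • Δ).adjugate i j := by
      intro t ht
      rw [Matrix.inv_def, Matrix.smul_apply, Ring.inverse_eq_inv']
      rfl
    apply ContinuousOn.congr _ heq
    exact ((hd.continuousOn.inv₀ fun t ht => (hdet t ht).ne_zero).mul hadj.continuousOn)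
  set S : Set ℝ := ⋂ i, ⋂ j, (Set.Icc (0:ℝ) 1 ∩
      (fun t : ℝ => (1 - t • Δ)⁻¹ i j) ⁻¹' (Set.Ici 0)) with hS
  have hSsub : S ⊆ Set.Icc (0:ℝ) 1 := by
    intro t ht
    rw [hS] at ht
    simp only [Set.mem_iInter, Set.mem_inter_iff] at ht
    exact (ht i0 j0).1
  have hSmem : ∀ t, t ∈ S ↔ (t ∈ Set.Icc (0:ℝ) 1 ∧ ∀ i j, 0 ≤ (1 - t • Δ)⁻¹ i j) := by
    intro t
    rw [hS]
    simp only [Set.mem_iInter, Set.mem_inter_iff, Set.mem_preimage, Set.mem_Ici]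
    constructor
    · intro h; exact ⟨(h i0 j0).1, fun i j => (h i j).2⟩
    · intro h i j; exact ⟨h.1, h.2 i j⟩
  have hclosed : IsClosed S := by
    apply isClosed_iInter; intro i; apply isClosed_iInter; intro j
    exact (hcont i j).preimage_isClosed_of_isClosed isClosed_Icc isClosed_Ici
  have h0S : (0:ℝ) ∈ S := by
    rw [hSmem]
    refine ⟨Set.mem_Icc.mpr ⟨le_refl _, zero_le_one⟩, ?_⟩
    intro i j
    simp only [zero_smul, sub_zero, inv_one]
    by_cases h : i = j <;> simp [Matrix.one_apply, h]
  have hbdd : BddAbove S := ⟨1, fun t ht => (hSsub ht).2⟩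
  set c := sSup S with hc
  have hcS : c ∈ S := hclosed.csSup_mem ⟨0, h0S⟩ hbdd
  have hcIcc := hSsub hcS
  have hcnn := (hSmem c).mp hcS
  -- claim c = 1
  have hc1 : c = 1 := by
    by_contra hne
    have hclt : c < 1 := lt_of_le_of_ne hcIcc.2 hne
    set Mc := (1 - c • Δ)⁻¹ with hMc
    set B := Mc * Δ with hB
    have hBnn : ∀ i j, 0 ≤ B i j := by
      intro i j
      rw [hB, Matrix.mul_apply]
      exact Finset.sum_nonneg fun k _ => mul_nonneg (hcnn.2 i k) (hΔ k j)
    set a : ℝ := 1 + ∑ p, ∑ q, B p q with ha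
    have hspos : (0:ℝ) ≤ ∑ p, ∑ q, B p q :=
      Finset.sum_nonneg fun p _ => Finset.sum_nonneg fun q _ => hBnn p q
    have haB : ∀ i j, B i j ≤ a := by
      intro i j
      rw [ha]
      have h1 : B i j ≤ ∑ q, B i q :=
        Finset.single_le_sum (fun q _ => hBnn i q) (Finset.mem_univ j)
      have h2 : (∑ q, B i q) ≤ ∑ p, ∑ q, B p q :=
        Finset.single_le_sum (fun p _ => Finset.sum_nonneg fun q _ => hBnn p q)
          (Finset.mem_univ i)
      linarith
    have ha0 : 0 < a := by rw [ha]; linarith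
    set h : ℝ := min (1 - c) (1 / (2 * ((n:ℝ) * a + 1))) with hh
    have hna : (0:ℝ) ≤ (n:ℝ) * a := mul_nonneg (Nat.cast_nonneg n) ha0.le
    have hhpos : 0 < h := by
      apply lt_min (by linarith)
      positivity
    have hh2 : h ≤ 1 / (2 * ((n:ℝ) * a + 1)) := min_le_right _ _
    have hh1 : h ≤ 1 - c := min_le_left _ _
    have ht' : c + h ∈ Set.Icc (0:ℝ) 1 := ⟨by linarith [hcIcc.1], by linarith⟩
    -- factorization
    have hMcmul : (1 - c • Δ) * Mc = 1 := Matrix.mul_nonsing_inv _ (hdet c hcIcc)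
    have hfact : 1 - (c + h) • Δ = (1 - c • Δ) * (1 - h • B) := by
      rw [Matrix.mul_sub, Matrix.mul_one, Matrix.mul_smul, hB, ← Matrix.mul_assoc, hMcmul,
        Matrix.one_mul, add_smul]
      abel
    have hXnn : ∀ i j, 0 ≤ (h • B) i j := fun i j => by
      rw [Matrix.smul_apply, smul_eq_mul]; exact mul_nonneg hhpos.le (hBnn i j)
    have hXle : ∀ i j, (h • B) i j ≤ h * a := by
      intro i j
      rw [Matrix.smul_apply, smul_eq_mul]
      exact mul_le_mul_of_nonneg_left (haB i j) hhpos.le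
    have hsm : (n:ℝ) * (h * a) < 1 := by
      have h1 : (n:ℝ) * (h * a) = ((n:ℝ) * a) * h := by ring
      rw [h1]
      have h2 : ((n:ℝ) * a) * h ≤ ((n:ℝ) * a) * (1 / (2 * ((n:ℝ) * a + 1))) :=
        mul_le_mul_of_nonneg_left hh2 hna
      have h3 : ((n:ℝ) * a) * (1 / (2 * ((n:ℝ) * a + 1))) < 1 := by
        rw [mul_one_div, div_lt_one (by linarith)]
        linarith
      exact lt_of_le_of_lt h2 h3
    have hMcUnit : IsUnit Mc :=
      (Matrix.isUnit_iff_isUnit_det _).mpr (Matrix.isUnit_det_of_left_inverse (B := (1 - c • Δ))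
        (Matrix.mul_nonsing_inv _ (hdet c hcIcc)))
    have hXunit : IsUnit (1 - h • B) := by
      have heq2 : Mc * (1 - (c + h) • Δ) = 1 - h • B := by
        rw [hfact, ← Matrix.mul_assoc, Matrix.nonsing_inv_mul _ (hdet c hcIcc), Matrix.one_mul]
      rw [← heq2]
      exact hMcUnit.mul (hUnit (c + h) ht')
    have hCrel : (1 - h • B)⁻¹ * (1 - h • B) = 1 :=
      Matrix.nonsing_inv_mul _ ((Matrix.isUnit_iff_isUnit_det _).mp hXunit)
    have hCnn : ∀ i j, 0 ≤ (1 - h • B)⁻¹ i j :=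
      small_inv_nonneg (h • B) _ hXnn (h * a) hXle hsm hCrel
    have hnew : (c + h) ∈ S := by
      rw [hSmem]
      refine ⟨ht', ?_⟩
      intro i j
      have : (1 - (c + h) • Δ)⁻¹ = (1 - h • B)⁻¹ * Mc := by
        rw [hfact, Matrix.mul_inv_rev]
      rw [this, Matrix.mul_apply]
      exact Finset.sum_nonneg fun k _ => mul_nonneg (hCnn i k) (hcnn.2 k j)
    have : c + h ≤ c := le_csSup hbdd hnew
    linarith
  rw [hc1] at hcnn
  have := hcnn.2 i0 j0
  rwa [one_smul] at this

def OPcond {n : ℕ} (Δ : Matrix (Fin n) (Fin n) ℝ) (j : Fin n) (x : Fin n → ℝ) : Prop :=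
  ∀ k, |x k - (if k = j then 1 else 0)| ≤ ∑ l, Δ k l * |x l|

lemma op_of_mem {n : ℕ} (Δ : Matrix (Fin n) (Fin n) ℝ)
    {A : Matrix (Fin n) (Fin n) ℝ}
    (hA : ∀ k l, |A k l - (1 : Matrix (Fin n) (Fin n) ℝ) k l| ≤ Δ k l)
    (hU : IsUnit A) (j : Fin n) : OPcond Δ j (fun k => A⁻¹ k j) := by
  intro k
  have hAA : A * A⁻¹ = 1 := Matrix.mul_nonsing_inv _ ((Matrix.isUnit_iff_isUnit_det _).mp hU)
  have he : ∑ l, A k l * A⁻¹ l j = (if k = j then 1 else 0) := by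
    have := congrFun (congrFun hAA k) j
    rw [Matrix.mul_apply] at this
    rw [this, Matrix.one_apply]
  have hdiff : (fun k => A⁻¹ k j) k - (if k = j then 1 else 0)
      = ∑ l, ((1 : Matrix (Fin n) (Fin n) ℝ) k l - A k l) * A⁻¹ l j := by
    have h1 : ∑ l, (1 : Matrix (Fin n) (Fin n) ℝ) k l * A⁻¹ l j = A⁻¹ k j := by
      rw [Finset.sum_eq_single k]
      · simp [Matrix.one_apply]
      · intro b _ hb
        simp [Matrix.one_apply, Ne.symm hb]
      · intro h; exact absurd (Finset.mem_univ k) h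
    simp only
    rw [← he, ← h1, ← Finset.sum_sub_distrib]
    exact Finset.sum_congr rfl fun l _ => by ring
  rw [hdiff]
  calc |∑ l, ((1 : Matrix (Fin n) (Fin n) ℝ) k l - A k l) * A⁻¹ l j|
      ≤ ∑ l, |((1 : Matrix (Fin n) (Fin n) ℝ) k l - A k l) * A⁻¹ l j| :=
        Finset.abs_sum_le_sum_abs _ _
    _ ≤ ∑ l, Δ k l * |(fun k => A⁻¹ k j) l| := by
        apply Finset.sum_le_sum
        intro l _
        rw [abs_mul]
        apply mul_le_mul_of_nonneg_right _ (abs_nonneg _)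
        rw [abs_sub_comm]
        exact hA k l

lemma exists_mem_of_op {n : ℕ} (Δ : Matrix (Fin n) (Fin n) ℝ) (hΔ : ∀ i j, 0 ≤ Δ i j)
    (hReg : ∀ A : Matrix (Fin n) (Fin n) ℝ,
      (∀ i j, |A i j - (1 : Matrix (Fin n) (Fin n) ℝ) i j| ≤ Δ i j) → IsUnit A)
    {j : Fin n} {x : Fin n → ℝ} (hx : OPcond Δ j x) :
    ∃ A : Matrix (Fin n) (Fin n) ℝ,
      (∀ k l, |A k l - (1 : Matrix (Fin n) (Fin n) ℝ) k l| ≤ Δ k l) ∧ ∀ i, A⁻¹ i j = x i := by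
  classical
  set s : Fin n → ℝ := fun l => if x l < 0 then -1 else 1 with hs
  have hsx : ∀ l, s l * x l = |x l| := by
    intro l
    rw [hs]
    by_cases h : x l < 0
    · simp [h, abs_of_neg h]
    · simp [h, abs_of_nonneg (not_lt.mp h)]
  have hsabs : ∀ l, |s l| = 1 := by
    intro l
    rw [hs]
    by_cases h : x l < 0 <;> simp [h]
  set d : Fin n → ℝ := fun k => ∑ l, Δ k l * |x l| with hd
  have hd0 : ∀ k, 0 ≤ d k := fun k =>
    Finset.sum_nonneg fun l _ => mul_nonneg (hΔ k l) (abs_nonneg _)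
  set A : Matrix (Fin n) (Fin n) ℝ := fun k l =>
    (1 : Matrix (Fin n) (Fin n) ℝ) k l -
      (if d k = 0 then 0 else (x k - (if k = j then 1 else 0)) * Δ k l * s l / d k) with hA
  have hmem : ∀ k l, |A k l - (1 : Matrix (Fin n) (Fin n) ℝ) k l| ≤ Δ k l := by
    intro k l
    rw [hA]
    simp only [sub_sub_cancel_left, abs_neg]
    by_cases h : d k = 0
    · simp [h, hΔ k l]
    · simp only [h, if_false]
      have hdk : 0 < d k := lt_of_le_of_ne (hd0 k) (Ne.symm h)
      rw [abs_div, abs_of_pos hdk, abs_mul, abs_mul, hsabs, mul_one, abs_of_nonneg (hΔ k l)]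
      rw [div_le_iff₀ hdk]
      exact le_of_le_of_eq (mul_le_mul_of_nonneg_right (hx k) (hΔ k l)) (mul_comm _ _)
  have hmul : ∀ k, ∑ l, A k l * x l = (if k = j then 1 else 0) := by
    intro k
    have hexp : ∀ l, A k l * x l = (1 : Matrix (Fin n) (Fin n) ℝ) k l * x l -
        (if d k = 0 then 0 else (x k - (if k = j then 1 else 0)) * Δ k l * s l / d k) * x l := by
      intro l; rw [hA]; ring
    rw [Finset.sum_congr rfl fun l _ => hexp l, Finset.sum_sub_distrib]
    have h1 : ∑ l, (1 : Matrix (Fin n) (Fin n) ℝ) k l * x l = x k := by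
      rw [Finset.sum_eq_single k]
      · simp [Matrix.one_apply]
      · intro b _ hb; simp [Matrix.one_apply, Ne.symm hb]
      · intro h; exact absurd (Finset.mem_univ k) h
    rw [h1]
    by_cases h : d k = 0
    · simp only [h, if_true]
      have hxk : x k = (if k = j then 1 else 0) := by
        have h3 : |x k - (if k = j then 1 else 0)| ≤ d k := hx k
        rw [h] at h3
        have := abs_nonpos_iff.mp h3
        linarith [sub_eq_zero.mp this]
      simp [hxk]
    · simp only [h, if_false]
      have h2 : ∑ l, (x k - (if k = j then 1 else 0)) * Δ k l * s l / d k * x l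
          = (x k - (if k = j then 1 else 0)) / d k * d k := by
        have hdk' : d k = ∑ l, Δ k l * |x l| := rfl
        rw [hdk', Finset.mul_sum]
        apply Finset.sum_congr rfl
        intro l _
        rw [← hsx l]
        ring
      rw [h2, div_mul_cancel₀ _ h]
      ring
  have hU : IsUnit A := hReg A hmem
  refine ⟨A, hmem, ?_⟩
  intro i
  have hAA : A⁻¹ * A = 1 := Matrix.nonsing_inv_mul _ ((Matrix.isUnit_iff_isUnit_det _).mp hU)
  have hxi : x i = ∑ k, A⁻¹ i k * (if k = j then 1 else 0) := by
    calc x i = ∑ k, (1 : Matrix (Fin n) (Fin n) ℝ) i k * x k := by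
          rw [Finset.sum_eq_single i]
          · simp [Matrix.one_apply]
          · intro b _ hb; simp [Matrix.one_apply, Ne.symm hb]
          · intro h; exact absurd (Finset.mem_univ i) h
      _ = ∑ k, (∑ l, A⁻¹ i l * A l k) * x k := by
          apply Finset.sum_congr rfl
          intro k _
          congr 1
          have := congrFun (congrFun hAA i) k
          rw [Matrix.mul_apply] at this
          rw [this]
      _ = ∑ k, ∑ l, A⁻¹ i l * (A l k * x k) := by
          apply Finset.sum_congr rfl
          intro k _
          rw [Finset.sum_mul]
          apply Finset.sum_congr rfl
          intro l _
          ring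
      _ = ∑ l, ∑ k, A⁻¹ i l * (A l k * x k) := Finset.sum_comm
      _ = ∑ l, A⁻¹ i l * ∑ k, A l k * x k := by
          apply Finset.sum_congr rfl
          intro l _
          rw [Finset.mul_sum]
      _ = ∑ l, A⁻¹ i l * (if l = j then 1 else 0) := by
          apply Finset.sum_congr rfl
          intro l _
          rw [hmul l]
  rw [hxi, Finset.sum_eq_single j]
  · simp
  · intro b _ hb; simp [hb]
  · intro h; exact absurd (Finset.mem_univ j) h

lemma mulVec_key {n : ℕ} (Δ : Matrix (Fin n) (Fin n) ℝ)
    (hdet : IsUnit (1 - Δ).det)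
    (hMnn : ∀ i j, 0 ≤ (1 - Δ)⁻¹ i j) (u w : Fin n → ℝ)
    (h : ∀ k, u k - ∑ l, Δ k l * u l ≤ w k) :
    ∀ k, u k ≤ ∑ l, (1 - Δ)⁻¹ k l * w l := by
  set M := (1 - Δ)⁻¹ with hM
  have hM1 : M * (1 - Δ) = 1 := Matrix.nonsing_inv_mul _ hdet
  have hrec : M.mulVec ((1 - Δ).mulVec u) = u := by
    rw [Matrix.mulVec_mulVec, hM1, Matrix.one_mulVec]
  intro k
  have hvl : ∀ l, ((1 - Δ).mulVec u) l = u l - ∑ m, Δ l m * u m := by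
    intro l
    rw [Matrix.sub_mulVec, Pi.sub_apply, Matrix.one_mulVec]
    simp [Matrix.mulVec, dotProduct]
  calc u k = (M.mulVec ((1 - Δ).mulVec u)) k := by rw [hrec]
    _ = ∑ l, M k l * ((1 - Δ).mulVec u) l := by simp [Matrix.mulVec, dotProduct]
    _ ≤ ∑ l, M k l * w l := by
        apply Finset.sum_le_sum
        intro l _
        apply mul_le_mul_of_nonneg_left _ (hMnn k l)
        rw [hvl l]
        exact h l

lemma M_diag_ge_one {n : ℕ} (Δ : Matrix (Fin n) (Fin n) ℝ) (hΔ : ∀ i j, 0 ≤ Δ i j)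
    (hdet : IsUnit (1 - Δ).det)
    (hMnn : ∀ i j, 0 ≤ (1 - Δ)⁻¹ i j) (j : Fin n) : 1 ≤ (1 - Δ)⁻¹ j j := by
  have h1 : (1 - Δ) * (1 - Δ)⁻¹ = 1 := Matrix.mul_nonsing_inv _ hdet
  have := congrFun (congrFun h1 j) j
  rw [Matrix.mul_apply, Matrix.one_apply_eq] at this
  have hexp : ∀ l, (1 - Δ) j l * (1 - Δ)⁻¹ l j
      = (1 : Matrix (Fin n) (Fin n) ℝ) j l * (1 - Δ)⁻¹ l j - Δ j l * (1 - Δ)⁻¹ l j := by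
    intro l; rw [Matrix.sub_apply]; ring
  rw [Finset.sum_congr rfl fun l _ => hexp l, Finset.sum_sub_distrib] at this
  have h2 : ∑ l, (1 : Matrix (Fin n) (Fin n) ℝ) j l * (1 - Δ)⁻¹ l j = (1 - Δ)⁻¹ j j := by
    rw [Finset.sum_eq_single j]
    · simp [Matrix.one_apply]
    · intro b _ hb; simp [Matrix.one_apply, Ne.symm hb]
    · intro h; exact absurd (Finset.mem_univ j) h
  rw [h2] at this
  have h3 : 0 ≤ ∑ l, Δ j l * (1 - Δ)⁻¹ l j :=
    Finset.sum_nonneg fun l _ => mul_nonneg (hΔ j l) (hMnn l j)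
  linarith

lemma op_abs_bound {n : ℕ} (Δ : Matrix (Fin n) (Fin n) ℝ)
    (hdet : IsUnit (1 - Δ).det)
    (hMnn : ∀ i j, 0 ≤ (1 - Δ)⁻¹ i j) {j : Fin n} {x : Fin n → ℝ}
    (hx : OPcond Δ j x) : ∀ k, |x k| ≤ (1 - Δ)⁻¹ k j := by
  intro k
  have key := mulVec_key Δ hdet hMnn (fun k => |x k|) (fun k => if k = j then 1 else 0) ?_ k
  · calc |x k| ≤ ∑ l, (1 - Δ)⁻¹ k l * (if l = j then 1 else 0) := key
      _ = (1 - Δ)⁻¹ k j := by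
          rw [Finset.sum_eq_single j]
          · simp
          · intro b _ hb; simp [hb]
          · intro h; exact absurd (Finset.mem_univ j) h
  · intro m
    have h1 : |x m| ≤ |x m - (if m = j then 1 else 0)| + |(if m = j then (1:ℝ) else 0)| := by
      calc |x m| = |(x m - (if m = j then 1 else 0)) + (if m = j then 1 else 0)| := by ring_nf
        _ ≤ _ := abs_add_le _ _
    have h2 : |(if m = j then (1:ℝ) else 0)| = (if m = j then (1:ℝ) else 0) := by
      by_cases h : m = j <;> simp [h]
    have := hx m
    show |x m| - ∑ l, Δ m l * |x l| ≤ (if m = j then 1 else 0)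
    linarith

lemma op_diag_lb {n : ℕ} (Δ : Matrix (Fin n) (Fin n) ℝ) (hΔ : ∀ i j, 0 ≤ Δ i j)
    (hdet : IsUnit (1 - Δ).det)
    (hMnn : ∀ i j, 0 ≤ (1 - Δ)⁻¹ i j) {j : Fin n} {x : Fin n → ℝ}
    (hx : OPcond Δ j x) :
    (1 - Δ)⁻¹ j j / (2 * (1 - Δ)⁻¹ j j - 1) ≤ x j := by
  set m := (1 - Δ)⁻¹ j j with hm
  have hm1 : 1 ≤ m := M_diag_ge_one Δ hΔ hdet hMnn j
  -- first, x j > 0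
  have hpos : 0 < x j := by
    by_contra hneg
    push_neg at hneg
    have key := mulVec_key Δ hdet hMnn (fun k => |x k|)
      (fun k => if k = j then -1 else 0) ?_ j
    · have : ∑ l, (1 - Δ)⁻¹ j l * (if l = j then (-1:ℝ) else 0) = -m := by
        rw [Finset.sum_eq_single j]
        · simp [hm]
        · intro b _ hb; simp [hb]
        · intro h; exact absurd (Finset.mem_univ j) h
      rw [this] at key
      have := abs_nonneg (x j)
      linarith
    · intro k
      by_cases hk : k = j
      · subst hk
        have h1 := hx k
        simp only [eq_self_iff_true, if_true] at h1 ⊢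
        have h2 : |x k - 1| = 1 - x k := by
          rw [abs_of_nonpos (by linarith)]; ring
        have h3 : |x k| = -x k := abs_of_nonpos hneg
        linarith
      · have h1 := hx k
        simp only [if_neg hk] at h1 ⊢
        rw [sub_zero] at h1
        linarith
  -- now the bound
  have key := mulVec_key Δ hdet hMnn (fun k => |x k|)
    (fun k => if k = j then 2 * x j - 1 else 0) ?_ j
  · have hsum : ∑ l, (1 - Δ)⁻¹ j l * (if l = j then 2 * x j - 1 else 0)
        = (2 * x j - 1) * m := by
      rw [Finset.sum_eq_single j]
      · rw [if_pos rfl, hm]; ring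
      · intro b _ hb; simp [hb]
      · intro h; exact absurd (Finset.mem_univ j) h
    rw [hsum] at key
    have hxj : |x j| = x j := abs_of_pos hpos
    simp only [hxj] at key
    -- x j ≤ (2 x j - 1) m, m ≥ 1 ⟹ m / (2 m - 1) ≤ x j
    rw [div_le_iff₀ (by linarith)]
    nlinarith
  · intro k
    by_cases hk : k = j
    · subst hk
      have h1 := hx k
      simp only [eq_self_iff_true, if_true] at h1 ⊢
      have h2 : 1 - x k ≤ |x k - 1| := by
        rw [abs_sub_comm]; exact le_abs_self _
      have h3 : |x k| = x k := abs_of_pos hpos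
      linarith
    · have h1 := hx k
      simp only [if_neg hk] at h1 ⊢
      rw [sub_zero] at h1
      linarith

theorem interval_inverse_unit_midpoint {n : ℕ} (Δ : Matrix (Fin n) (Fin n) ℝ)
    (hΔ : ∀ i j, 0 ≤ Δ i j)
    (hReg : ∀ A : Matrix (Fin n) (Fin n) ℝ,
      (∀ i j, |A i j - (1 : Matrix (Fin n) (Fin n) ℝ) i j| ≤ Δ i j) → IsUnit A) :
    let M : Matrix (Fin n) (Fin n) ℝ := (1 - Δ)⁻¹
    let k : Fin n → ℝ := fun j => 2 * (M j j) ^ 2 / (2 * M j j - 1)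
    ∀ i j : Fin n,
      sInf {v : ℝ | ∃ A : Matrix (Fin n) (Fin n) ℝ,
          (∀ k' l, |A k' l - (1 : Matrix (Fin n) (Fin n) ℝ) k' l| ≤ Δ k' l) ∧
          v = A⁻¹ i j} = (-M + Matrix.diagonal k) i j ∧
      sSup {v : ℝ | ∃ A : Matrix (Fin n) (Fin n) ℝ,
          (∀ k' l, |A k' l - (1 : Matrix (Fin n) (Fin n) ℝ) k' l| ≤ Δ k' l) ∧
          v = A⁻¹ i j} = M i j := by
  intro M k i j
  have hmem1Δ : ∀ a b : Fin n, |(1 - Δ) a b - (1 : Matrix (Fin n) (Fin n) ℝ) a b| ≤ Δ a b := by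
    intro a b
    have h : (1 - Δ) a b - (1 : Matrix (Fin n) (Fin n) ℝ) a b = -(Δ a b) := by
      simp [Matrix.sub_apply]
    rw [h, abs_neg, abs_of_nonneg (hΔ a b)]
  have hdet : IsUnit (1 - Δ).det :=
    (Matrix.isUnit_iff_isUnit_det _).mp (hReg _ hmem1Δ)
  have hMnn : ∀ a b, 0 ≤ M a b := interval_M_nonneg Δ hΔ hReg
  have hm1 : 1 ≤ M j j := M_diag_ge_one Δ hΔ hdet hMnn j
  have hDM : ∀ a b, ∑ l, Δ a l * M l b = M a b - (if a = b then 1 else 0) := by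
    intro a b
    have h1 : (1 - Δ) * M = 1 := Matrix.mul_nonsing_inv _ hdet
    have h2 := congrFun (congrFun h1 a) b
    rw [Matrix.mul_apply, Matrix.one_apply] at h2
    have hexp : ∀ l, (1 - Δ) a l * M l b
        = (1 : Matrix (Fin n) (Fin n) ℝ) a l * M l b - Δ a l * M l b := by
      intro l; rw [Matrix.sub_apply]; ring
    rw [Finset.sum_congr rfl fun l _ => hexp l, Finset.sum_sub_distrib] at h2
    have h3 : ∑ l, (1 : Matrix (Fin n) (Fin n) ℝ) a l * M l b = M a b := by
      rw [Finset.sum_eq_single a]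
      · simp [Matrix.one_apply]
      · intro c _ hc; simp [Matrix.one_apply, Ne.symm hc]
      · intro h; exact absurd (Finset.mem_univ a) h
    rw [h3] at h2
    linarith
  set S : Set ℝ := {v : ℝ | ∃ A : Matrix (Fin n) (Fin n) ℝ,
      (∀ k' l, |A k' l - (1 : Matrix (Fin n) (Fin n) ℝ) k' l| ≤ Δ k' l) ∧
      v = A⁻¹ i j} with hSdef
  -- generic bounds for elements of S
  have hbound : ∀ v ∈ S, |v| ≤ M i j := by
    intro v hv
    obtain ⟨A, hA, rfl⟩ := hv
    exact op_abs_bound Δ hdet hMnn (op_of_mem Δ hA (hReg A hA) j) i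
  -- Sup part
  have hsup : sSup S = M i j := by
    apply IsGreatest.csSup_eq
    constructor
    · exact ⟨1 - Δ, hmem1Δ, rfl⟩
    · intro v hv
      exact le_trans (le_abs_self v) (hbound v hv)
  refine ⟨?_, hsup⟩
  -- Inf part
  by_cases hij : i = j
  · subst hij
    have htgt : (-M + Matrix.diagonal k) i i = M i i / (2 * M i i - 1) := by
      rw [Matrix.add_apply, Matrix.neg_apply, Matrix.diagonal_apply_eq]
      show -M i i + 2 * (M i i) ^ 2 / (2 * M i i - 1) = M i i / (2 * M i i - 1)
      have hne : 2 * M i i - 1 ≠ 0 := by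
        have : 1 ≤ M i i := M_diag_ge_one Δ hΔ hdet hMnn i
        intro h; rw [sub_eq_zero] at h; linarith
      rw [eq_div_iff hne, add_mul, div_mul_cancel₀ _ hne]
      ring
    rw [htgt]
    apply IsLeast.csInf_eq
    constructor
    · -- witness 3
      set m := M i i with hm
      have hmi : 1 ≤ m := M_diag_ge_one Δ hΔ hdet hMnn i
      set t : ℝ := 1 / (2 * m - 1) with htdef
      have h2m : 0 < 2 * m - 1 := by linarith
      have ht : 0 < t := by rw [htdef]; positivity
      set x : Fin n → ℝ := fun k' => if k' = i then t * m else -(t * M k' i) with hxdef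
      have habs : ∀ l, |x l| = t * M l i := by
        intro l
        simp only [hxdef]
        by_cases hl : l = i
        · subst hl; rw [if_pos rfl, abs_of_nonneg (by positivity)]
        · rw [if_neg hl, abs_neg, abs_of_nonneg (mul_nonneg ht.le (hMnn l i))]
      have hx : OPcond Δ i x := by
        intro k'
        have hrhs : ∑ l, Δ k' l * |x l| = t * (M k' i - (if k' = i then 1 else 0)) := by
          rw [Finset.sum_congr rfl fun l _ => by rw [habs l]]
          rw [← hDM k' i, Finset.mul_sum]
          apply Finset.sum_congr rfl
          intro l _
          ring
        rw [hrhs]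
        by_cases hk : k' = i
        · subst hk
          simp only [hxdef]
          simp only [if_pos rfl, eq_self_iff_true, if_true]
          have htm : t * m ≤ 1 := by
            rw [htdef, one_div, inv_mul_le_iff₀ h2m]
            linarith
          rw [abs_of_nonpos (by linarith)]
          have h1 : (2 * m - 1) * t = 1 := by
            rw [htdef]; field_simp
          nlinarith
        · simp only [hxdef]
          simp only [if_neg hk, sub_zero]
          rw [abs_neg, abs_of_nonneg (mul_nonneg ht.le (hMnn k' i))]
      obtain ⟨A, hA, hAinv⟩ := exists_mem_of_op Δ hΔ hReg hx
      refine ⟨A, hA, ?_⟩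
      rw [hAinv i, hxdef]
      simp only [if_pos rfl, eq_self_iff_true, if_true]
      rw [htdef]
      field_simp
    · intro v hv
      obtain ⟨A, hA, rfl⟩ := hv
      exact op_diag_lb Δ hΔ hdet hMnn (x := fun k'' => A⁻¹ k'' i)
        (op_of_mem Δ hA (hReg A hA) i)
  · have htgt : (-M + Matrix.diagonal k) i j = -(M i j) := by
      rw [Matrix.add_apply, Matrix.neg_apply, Matrix.diagonal_apply_ne _ hij]
      ring
    rw [htgt]
    apply IsLeast.csInf_eq
    constructor
    · -- witness 2
      set x : Fin n → ℝ := fun k' => if k' = i then -(M k' j) else M k' j with hxdef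
      have habs : ∀ l, |x l| = M l j := by
        intro l
        simp only [hxdef]
        by_cases hl : l = i
        · subst hl; rw [if_pos rfl, abs_neg, abs_of_nonneg (hMnn l j)]
        · rw [if_neg hl, abs_of_nonneg (hMnn l j)]
      have hx : OPcond Δ j x := by
        intro k'
        have hrhs : ∑ l, Δ k' l * |x l| = M k' j - (if k' = j then 1 else 0) := by
          rw [Finset.sum_congr rfl fun l _ => by rw [habs l], hDM k' j]
        rw [hrhs]
        by_cases hk : k' = i
        · subst hk
          simp only [hxdef]
          simp only [if_pos rfl, eq_self_iff_true, if_true, if_neg hij]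
          rw [sub_zero, abs_neg, abs_of_nonneg (hMnn k' j)]
          simp
        · simp only [hxdef]
          simp only [if_neg hk]
          by_cases hkj : k' = j
          · subst hkj
            simp only [eq_self_iff_true, if_true]
            rw [abs_of_nonneg (by linarith)]
          · simp only [if_neg hkj, sub_zero]
            rw [abs_of_nonneg (hMnn k' j)]
      obtain ⟨A, hA, hAinv⟩ := exists_mem_of_op Δ hΔ hReg hx
      refine ⟨A, hA, ?_⟩
      rw [hAinv i, hxdef]
      simp only [if_pos rfl, eq_self_iff_true, if_true]
    · intro v hv
      have := hbound v hv
      have := neg_abs_le v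
      linarith
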